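/- For every $\gamma \in (0,1]$ and every $y \in [-1,1]$, $(1+y)^{1+\gamma} \le 1 + (1+\gamma)y + \gamma(1+\gamma)y^2/2 + 3\gamma |y|^3$. -/

import Mathlib

open Real Set

private lemma hasDerivAt_aux (a b e c d p t : ℝ) (h : c + d * t ≠ 0) :
    HasDerivAt (fun t : ℝ => a + b * t + e * t ^ 2 / 2 - (c + d * t) ^ p)
      (b + e * t - p * (c + d * t) ^ (p - 1) * d) t := by
  have h1 : HasDerivAt (fun t : ℝ => c + d * t) d t := by
    simpa using ((hasDerivAt_id t).const_mul d).const_add c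
  have h2 : HasDerivAt (fun t : ℝ => (c + d * t) ^ p)
      (p * (c + d * t) ^ (p - 1) * d) t :=
    by have := (Real.hasDerivAt_rpow_const (p := p) (Or.inl h)).comp t h1; exact this
  have h3 : HasDerivAt (fun t : ℝ => a + b * t + e * t ^ 2 / 2) (b + e * t) t := by
    have hb : HasDerivAt (fun t : ℝ => a + b * t) b t := by
      simpa using ((hasDerivAt_id t).const_mul b).const_add a
    have he : HasDerivAt (fun t : ℝ => e * t ^ 2 / 2) (e * t) t := by
      have := ((hasDerivAt_pow 2 t).const_mul e).div_const 2
      refine this.congr_deriv ?_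
      ring
    exact hb.add he
  exact h3.sub h2

/-- For `p ∈ [1,2]` and `y ≥ 0`: `(1+y)^p ≤ 1 + p y + p(p-1) y²/2`. -/
private lemma aux_pos (p y : ℝ) (hp1 : 1 ≤ p) (hp2 : p ≤ 2) (hy : 0 ≤ y) :
    (1 + y) ^ p ≤ 1 + p * y + p * (p - 1) * y ^ 2 / 2 := by
  set F : ℝ → ℝ := fun t => 1 + p * t + (p * (p - 1)) * t ^ 2 / 2 - (1 + 1 * t) ^ p with hF
  have hne : ∀ t : ℝ, t ∈ Icc (0 : ℝ) y → (1 : ℝ) + 1 * t ≠ 0 := by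
    intro t ht
    nlinarith [ht.1]
  have hderiv : ∀ t ∈ Icc (0 : ℝ) y,
      HasDerivAt F (p + p * (p - 1) * t - p * (1 + 1 * t) ^ (p - 1) * 1) t := by
    intro t ht
    exact hasDerivAt_aux 1 p (p * (p - 1)) 1 1 p t (hne t ht)
  have hmono : MonotoneOn F (Icc 0 y) := by
    apply monotoneOn_of_deriv_nonneg (convex_Icc 0 y)
    · exact fun t ht => ((hderiv t ht).continuousAt).continuousWithinAt
    · intro t ht
      exact ((hderiv t (interior_subset ht)).differentiableAt).differentiableWithinAt
    · intro t ht
      have ht' : t ∈ Icc (0 : ℝ) y := interior_subset ht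
      rw [(hderiv t ht').deriv]
      have ht0 : 0 ≤ t := ht'.1
      have hb : (1 + t) ^ (p - 1) ≤ 1 + (p - 1) * t :=
        rpow_one_add_le_one_add_mul_self (by linarith) (by linarith) (by linarith)
      have hb' : p * ((1 + t) ^ (p - 1)) ≤ p * (1 + (p - 1) * t) :=
        mul_le_mul_of_nonneg_left hb (by linarith)
      have h1t : (1 : ℝ) + 1 * t = 1 + t := by ring
      rw [h1t]
      nlinarith [hb']
  have h0 : (0 : ℝ) ∈ Icc (0 : ℝ) y := ⟨le_refl 0, hy⟩
  have hyy : y ∈ Icc (0 : ℝ) y := ⟨hy, le_refl y⟩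
  have hle := hmono h0 hyy hy
  have hF0 : F 0 = 0 := by simp [hF]
  rw [hF0] at hle
  simp only [hF] at hle
  rw [show (1 : ℝ) + 1 * y = 1 + y by ring] at hle
  linarith

/-- For `γ ∈ (0,1]` and `x ∈ [0,1]`: `(1-x)^γ ≤ 1 - γ x + γ(γ-1) x²/2`. -/
private lemma aux_neg (γ x : ℝ) (hγ1 : 0 < γ) (hγ2 : γ ≤ 1) (hx0 : 0 ≤ x) (hx1 : x ≤ 1) :
    (1 - x) ^ γ ≤ 1 - γ * x + γ * (γ - 1) * x ^ 2 / 2 := by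
  rcases eq_or_lt_of_le hx1 with rfl | hx1
  · rw [sub_self, Real.zero_rpow hγ1.ne']
    nlinarith
  set G : ℝ → ℝ := fun t => 1 + (-γ) * t + (γ * (γ - 1)) * t ^ 2 / 2 - (1 + (-1) * t) ^ γ
    with hG
  have hne : ∀ t : ℝ, t ∈ Icc (0 : ℝ) x → (1 : ℝ) + (-1) * t ≠ 0 := by
    intro t ht
    have h1 := ht.2
    nlinarith [ht.1]
  have hderiv : ∀ t ∈ Icc (0 : ℝ) x,
      HasDerivAt G ((-γ) + γ * (γ - 1) * t - γ * (1 + (-1) * t) ^ (γ - 1) * (-1)) t := by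
    intro t ht
    exact hasDerivAt_aux 1 (-γ) (γ * (γ - 1)) 1 (-1) γ t (hne t ht)
  have hmono : MonotoneOn G (Icc 0 x) := by
    apply monotoneOn_of_deriv_nonneg (convex_Icc 0 x)
    · exact fun t ht => ((hderiv t ht).continuousAt).continuousWithinAt
    · intro t ht
      exact ((hderiv t (interior_subset ht)).differentiableAt).differentiableWithinAt
    · intro t ht
      have ht' : t ∈ Icc (0 : ℝ) x := interior_subset ht
      rw [(hderiv t ht').deriv]
      have ht0 : 0 ≤ t := ht'.1
      have ht1 : t < 1 := lt_of_le_of_lt ht'.2 hx1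
      have hpos : (0 : ℝ) < 1 - t := by linarith
      have hkey : 1 + (1 - γ) * t ≤ (1 - t) ^ (γ - 1) := by
        have hb : (1 - t) ^ (1 - γ) ≤ 1 - (1 - γ) * t := by
          have h' := rpow_one_add_le_one_add_mul_self (s := -t) (p := 1 - γ)
            (by linarith) (by linarith) (by linarith)
          rw [show (1 : ℝ) + -t = 1 - t by ring] at h'
          linarith [h']
        have hbpos : (0 : ℝ) < (1 - t) ^ (1 - γ) := Real.rpow_pos_of_pos hpos _
        have hrpos : (0 : ℝ) < 1 - (1 - γ) * t := by nlinarith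
        have hinv : (1 - (1 - γ) * t)⁻¹ ≤ ((1 - t) ^ (1 - γ))⁻¹ :=
          inv_anti₀ hbpos hb
        have heq : (1 - t) ^ (γ - 1) = ((1 - t) ^ (1 - γ))⁻¹ := by
          rw [← Real.rpow_neg hpos.le]
          ring_nf
        have h2 : 1 + (1 - γ) * t ≤ (1 - (1 - γ) * t)⁻¹ := by
          rw [inv_eq_one_div, le_div_iff₀ hrpos]
          nlinarith [sq_nonneg ((1 - γ) * t)]
        rw [heq]
        exact le_trans h2 hinv
      have hkey' : γ * (1 + (1 - γ) * t) ≤ γ * ((1 - t) ^ (γ - 1)) :=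
        mul_le_mul_of_nonneg_left hkey hγ1.le
      rw [show (1 : ℝ) + (-1) * t = 1 - t by ring]
      nlinarith [hkey']
  have h0 : (0 : ℝ) ∈ Icc (0 : ℝ) x := ⟨le_refl 0, hx0⟩
  have hxx : x ∈ Icc (0 : ℝ) x := ⟨hx0, le_refl x⟩
  have hle := hmono h0 hxx hx0
  have hG0 : G 0 = 0 := by simp [hG]
  rw [hG0] at hle
  simp only [hG] at hle
  rw [show (1 : ℝ) + (-1) * x = 1 - x by ring] at hle
  linarith

/-- For `γ ∈ (0,1]` and `y ∈ [-1,1]`,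
`(1+y)^{1+γ} ≤ 1 + (1+γ) y + γ(1+γ) y²/2 + 3 γ |y|³`. -/
theorem rpow_one_add_le (γ y : ℝ) (hγ : γ ∈ Set.Ioc (0 : ℝ) 1)
    (hy : y ∈ Set.Icc (-1 : ℝ) 1) :
    (1 + y) ^ (1 + γ) ≤
      1 + (1 + γ) * y + γ * (1 + γ) * y ^ 2 / 2 + 3 * γ * |y| ^ 3 := by
  obtain ⟨hγ1, hγ2⟩ := hγ
  obtain ⟨hy1, hy2⟩ := hy
  rcases le_or_gt 0 y with hy0 | hy0
  · -- y ≥ 0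
    rw [abs_of_nonneg hy0]
    have h := aux_pos (1 + γ) y (by linarith) (by linarith) hy0
    have hcube : 0 ≤ 3 * γ * y ^ 3 := by positivity
    nlinarith [h]
  · -- y < 0
    rw [abs_of_neg hy0]
    rcases eq_or_lt_of_le hy1 with hym1 | hym1
    · -- y = -1
      rw [← hym1]
      rw [show (1 : ℝ) + -1 = 0 by ring, Real.zero_rpow (by linarith)]
      nlinarith
    · -- -1 < y < 0
      set x := -y with hxdef
      clear_value x
      have hx0 : 0 < x := by rw [hxdef]; linarith
      have hx1 : x < 1 := by rw [hxdef]; linarith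
      have h1y : (1 : ℝ) + y = 1 - x := by rw [hxdef]; ring
      have hpos : (0 : ℝ) < 1 - x := by linarith
      rw [h1y]
      have hsplit : (1 - x) ^ (1 + γ) = (1 - x) * (1 - x) ^ γ := by
        rw [Real.rpow_add hpos, Real.rpow_one]
      rw [hsplit]
      have hB := aux_neg γ x hγ1 hγ2 hx0.le hx1.le
      have hmul : (1 - x) * (1 - x) ^ γ ≤ (1 - x) * (1 - γ * x + γ * (γ - 1) * x ^ 2 / 2) :=
        mul_le_mul_of_nonneg_left hB hpos.le
      refine le_trans hmul ?_
      have hyx : y = -x := by rw [hxdef]; ring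
      rw [hyx]
      have hcube : 0 ≤ γ * x ^ 3 := by positivity
      nlinarith [hcube, mul_nonneg hγ1.le hcube]
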